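/- Let ι be a finite type, S a nonempty subset of ℤ≥0^ι, N(S) the associated Newton polyhedron, and ρ a vector of weights on ℝ^ι. Set ν = min{ρ(σ) : σ ∈ S} and F_ρ = {x ∈ N(S) : ρ(x) = ν}. Then F_ρ is a nonempty compact exposed face of N(S). -/

import Mathlib

open Pointwise

/-- A vector of weights on `ℝ^ι`: a linear map `ρ : (ι → ℝ) → ℝ` with `ρ(σ) > 0`
for every nonzero `σ` with all coordinates nonnegative. -/
def IsWeightVector {ι : Type*} (ρ : (ι → ℝ) →ₗ[ℝ] ℝ) : Prop :=
  ∀ σ : ι → ℝ, (∀ i, 0 ≤ σ i) → σ ≠ 0 → 0 < ρ σ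

/-- The Newton polyhedron of a set `S ⊆ ℤ≥0^ι`: the Minkowski sum of the convex
hull of `S` (viewed inside `ℝ^ι`) with the nonnegative orthant. -/
def newtonPolyhedron {ι : Type*} (S : Set (ι → ℕ)) : Set (ι → ℝ) :=
  convexHull ℝ ((fun σ : ι → ℕ => fun i => (σ i : ℝ)) '' S) + {x : ι → ℝ | ∀ i, 0 ≤ x i}

/-- With `ν = min ρ(S)` and `F_ρ = {x ∈ N(S) : ρ(x) = ν}`, the set
`F_ρ` is a nonempty compact exposed face of `N(S)`. -/
theorem face_is_nonempty_compact_exposed {ι : Type*} [Fintype ι]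
    (ρ : (ι → ℝ) →ₗ[ℝ] ℝ) (hρ : IsWeightVector ρ)
    (S : Set (ι → ℕ)) (hS : S.Nonempty) (ν : ℝ)
    (hν : IsLeast ((fun σ : ι → ℕ => ρ (fun i => (σ i : ℝ))) '' S) ν) :
    Set.Nonempty {x ∈ newtonPolyhedron S | ρ x = ν} ∧
      IsCompact {x ∈ newtonPolyhedron S | ρ x = ν} ∧
      IsExposed ℝ (newtonPolyhedron S) {x ∈ newtonPolyhedron S | ρ x = ν} := by
  classical
  set e : (ι → ℕ) → (ι → ℝ) := fun σ => fun i => (σ i : ℝ) with he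
  -- ρ is nonnegative on the orthant
  have horth : ∀ y : ι → ℝ, (∀ i, 0 ≤ y i) → 0 ≤ ρ y := by
    intro y hy
    rcases eq_or_ne y 0 with h | h
    · simp [h]
    · exact (hρ y hy h).le
  -- ρ ≥ ν on the convex hull of S
  have hhull : ∀ c ∈ convexHull ℝ (e '' S), ν ≤ ρ c := by
    intro c hc
    have hsub : convexHull ℝ (e '' S) ⊆ {z | ν ≤ ρ z} := by
      apply convexHull_min
      · rintro _ ⟨σ, hσ, rfl⟩
        exact hν.2 ⟨σ, hσ, rfl⟩
      · exact convex_halfSpace_ge ρ.isLinear ν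
    exact hsub hc
  -- ρ ≥ ν on the Newton polyhedron
  have hlb : ∀ x ∈ newtonPolyhedron S, ν ≤ ρ x := by
    rintro x ⟨c, hc, y, hy, rfl⟩
    have h1 := hhull c hc
    have h2 := horth y hy
    rw [map_add]
    linarith
  -- the minimizing point
  obtain ⟨σ₀, hσ₀S, hσ₀ν⟩ := hν.1
  have hσ₀ν' : ρ (e σ₀) = ν := hσ₀ν
  have hmemN : ∀ σ ∈ S, e σ ∈ newtonPolyhedron S := by
    intro σ hσ
    have h1 : e σ ∈ convexHull ℝ (e '' S) := subset_convexHull ℝ _ ⟨σ, hσ, rfl⟩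
    have h2 : (0 : ι → ℝ) ∈ {x : ι → ℝ | ∀ i, 0 ≤ x i} := fun i => le_refl 0
    have := Set.add_mem_add h1 h2
    rwa [add_zero] at this
  -- the convex-hull description of the face
  have hF : {x ∈ newtonPolyhedron S | ρ x = ν}
      = convexHull ℝ (e '' {σ ∈ S | ρ (e σ) = ν}) := by
    apply Set.Subset.antisymm
    · rintro x ⟨hxN, hxρ⟩
      obtain ⟨c, hc, y, hy, rfl⟩ := hxN
      have h1 : ν ≤ ρ c := hhull c hc
      have h2 : 0 ≤ ρ y := horth y hy
      rw [map_add] at hxρ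
      have hy0 : y = 0 := by
        by_contra h
        have := hρ y hy h
        linarith
      subst hy0
      rw [map_zero, add_zero] at hxρ
      have hc0 : (fun x1 x2 => x1 + x2) c (0 : ι → ℝ) = c := add_zero c
      rw [hc0]
      rw [convexHull_eq] at hc
      obtain ⟨κ, t, w, z, hw0, hw1, hz, hcc⟩ := hc
      have hρz : ∀ i ∈ t, ν ≤ ρ (z i) := by
        intro i hi
        obtain ⟨σ, hσ, hzi⟩ := hz i hi
        rw [← hzi]
        exact hν.2 ⟨σ, hσ, rfl⟩
      have hρc : ρ c = ∑ i ∈ t, w i * ρ (z i) := by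
        rw [← hcc, Finset.centerMass_eq_of_sum_1 _ _ hw1, map_sum]
        simp [smul_eq_mul]
      have hle : ∀ i ∈ t, w i * ν ≤ w i * ρ (z i) := fun i hi =>
        mul_le_mul_of_nonneg_left (hρz i hi) (hw0 i hi)
      have hsum : ∑ i ∈ t, w i * ρ (z i) = ∑ i ∈ t, w i * ν := by
        rw [← hρc, hxρ, ← Finset.sum_mul, hw1, one_mul]
      have hall : ∀ i ∈ t, w i * ν = w i * ρ (z i) :=
        (Finset.sum_eq_sum_iff_of_le hle).1 hsum.symm
      set t' := t.filter (fun i => w i ≠ 0) with ht'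
      have hsum' : ∑ i ∈ t', w i = 1 := by
        rw [ht', Finset.sum_filter_ne_zero, hw1]
      have hmemT : ∀ i ∈ t', z i ∈ e '' {σ ∈ S | ρ (e σ) = ν} := by
        intro i hi
        rw [ht', Finset.mem_filter] at hi
        obtain ⟨σ, hσ, hzi⟩ := hz i hi.1
        refine ⟨σ, ⟨hσ, ?_⟩, hzi⟩
        have := hall i hi.1
        have hρzi : ρ (z i) = ν := (mul_left_cancel₀ hi.2 this).symm
        have hzi' : e σ = z i := hzi
        rw [hzi']
        exact hρzi
      have hcc' : t'.centerMass w z = c := by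
        rw [ht']
        rw [show (Finset.filter (fun i => w i ≠ 0) t) = {i ∈ t | w i ≠ 0} from rfl]
        rw [Finset.centerMass_filter_ne_zero]
        exact hcc
      rw [← hcc']
      exact Finset.centerMass_mem_convexHull t'
        (fun i hi => hw0 i (Finset.filter_subset _ _ hi))
        (by rw [hsum']; exact one_pos) hmemT
    · apply convexHull_min
      · rintro _ ⟨σ, ⟨hσS, hσν⟩, rfl⟩
        exact ⟨hmemN σ hσS, hσν⟩
      · have hNconv : Convex ℝ (newtonPolyhedron S) := by
          apply Convex.add (convex_convexHull ℝ _)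
          intro a ha b hb s u hs hu hsu i
          simp only [Pi.add_apply, Pi.smul_apply, smul_eq_mul]
          have := ha i
          have := hb i
          positivity
        exact hNconv.inter (convex_hyperplane ρ.isLinear ν)
  -- finiteness of the minimizing exponents
  have hfin : ({σ ∈ S | ρ (e σ) = ν}).Finite := by
    have hp : ∀ i : ι, 0 < ρ (Pi.single i 1) := by
      intro i
      apply hρ
      · intro j
        rcases eq_or_ne j i with h | h <;> simp [Pi.single_apply, h]
      · intro h
        have := congrFun h i
        simp at this
    apply Set.Finite.subset
      (Set.finite_Icc (0 : ι → ℕ) (fun i => Nat.floor (ν / ρ (Pi.single i 1))))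
    rintro σ ⟨hσS, hσν⟩
    rw [Set.mem_Icc]
    refine ⟨fun i => Nat.zero_le _, fun i => ?_⟩
    apply Nat.le_floor
    rw [le_div_iff₀ (hp i)]
    have hsum : ρ (e σ) = ∑ j, (σ j : ℝ) * ρ (Pi.single j 1) := by
      rw [LinearMap.pi_apply_eq_sum_univ ρ (e σ)]
      apply Finset.sum_congr rfl
      intro j _
      have hpk : (fun k => if j = k then (1 : ℝ) else 0) = Pi.single j 1 := by
        funext k
        rcases eq_or_ne j k with h | h
        · subst h; simp
        · simp [Pi.single_apply, h, Ne.symm h]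
      rw [smul_eq_mul, hpk]
    have hterm : ∀ j ∈ Finset.univ, 0 ≤ (σ j : ℝ) * ρ (Pi.single j 1) := by
      intro j _
      exact mul_nonneg (Nat.cast_nonneg _) (hp j).le
    calc (σ i : ℝ) * ρ (Pi.single i 1)
        ≤ ∑ j, (σ j : ℝ) * ρ (Pi.single j 1) :=
          Finset.single_le_sum hterm (Finset.mem_univ i)
      _ = ρ (e σ) := hsum.symm
      _ = ν := hσν
  refine ⟨⟨e σ₀, hmemN σ₀ hσ₀S, hσ₀ν⟩, ?_, ?_⟩
  · rw [hF]
    exact (hfin.image e).isCompact_convexHull (𝕜 := ℝ)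
  · intro _
    refine ⟨-(LinearMap.toContinuousLinearMap ρ), ?_⟩
    ext x
    simp only [Set.mem_setOf_eq, ContinuousLinearMap.neg_apply,
      LinearMap.coe_toContinuousLinearMap', neg_le_neg_iff]
    constructor
    · rintro ⟨hxN, hxρ⟩
      exact ⟨hxN, fun y hy => hxρ ▸ hlb y hy⟩
    · rintro ⟨hxN, hx⟩
      refine ⟨hxN, le_antisymm ?_ (hlb x hxN)⟩
      have := hx (e σ₀) (hmemN σ₀ hσ₀S)
      rwa [hσ₀ν'] at this
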